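/- Let D ⊂ ℂ be open and connected and let f : D → ℂ be holomorphic and injective. Define F : D × D → ℂ by F(x, ξ) = (f(x) − f(ξ))/(x − ξ) for x ≠ ξ and F(x, x) = f′(x). Then F is holomorphic on D × D (as a function of two complex variables) and F(x, ξ) ≠ 0 for all (x, ξ) ∈ D × D. -/

import Mathlib

open Set Metric Filter Function Finset FormalMultilinearSeries
open scoped Topology ENNReal NNReal

noncomputable def dviSeries (c : ℕ → ℂ) : FormalMultilinearSeries ℂ (ℂ × ℂ) ℂ :=
  fun n => c (n+1) • ∑ k ∈ Finset.range (n+1),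
    (ContinuousMultilinearMap.mkPiAlgebraFin ℂ n ℂ).compContinuousLinearMap
      (fun i => if (i : ℕ) < k then ContinuousLinearMap.fst ℂ ℂ ℂ else ContinuousLinearMap.snd ℂ ℂ ℂ)

lemma prod_ite_lt (u v : ℂ) {k n : ℕ} (hk : k ≤ n) :
    (∏ i ∈ Finset.range n, (if i < k then u else v)) = u ^ k * v ^ (n - k) := by
  rw [Finset.range_eq_Ico, ← Finset.prod_Ico_consecutive _ (Nat.zero_le k) hk]
  rw [Finset.prod_congr rfl (fun i hi => if_pos (Finset.mem_Ico.1 hi).2),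
    Finset.prod_congr rfl (fun i hi => if_neg (not_lt.2 (Finset.mem_Ico.1 hi).1)),
    Finset.prod_const, Finset.prod_const, Nat.card_Ico, Nat.card_Ico, Nat.sub_zero]

lemma dviSeries_apply (c : ℕ → ℂ) (n : ℕ) (y : ℂ × ℂ) :
    dviSeries c n (fun _ => y) = c (n+1) * ∑ k ∈ Finset.range (n+1), y.1 ^ k * y.2 ^ (n - k) := by
  simp only [dviSeries, ContinuousMultilinearMap.smul_apply, ContinuousMultilinearMap.sum_apply,
    ContinuousMultilinearMap.compContinuousLinearMap_apply, smul_eq_mul]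
  congr 1
  refine Finset.sum_congr rfl fun k hk => ?_
  have hk' : k ≤ n := Nat.lt_succ_iff.1 (Finset.mem_range.1 hk)
  rw [← prod_ite_lt y.1 y.2 hk']
  rw [ContinuousMultilinearMap.mkPiAlgebraFin_apply]
  rw [List.prod_ofFn, ← Fin.prod_univ_eq_prod_range (fun i => if i < k then y.1 else y.2) n]
  refine Finset.prod_congr rfl fun i _ => ?_
  by_cases h : (i : ℕ) < k <;> simp [h]

lemma dviSeries_norm_le (c : ℕ → ℂ) (n : ℕ) :
    ‖dviSeries c n‖ ≤ ‖c (n+1)‖ * (n+1) := by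
  rw [dviSeries]
  refine (norm_smul_le (c (n+1)) (∑ k ∈ Finset.range (n+1),
    (ContinuousMultilinearMap.mkPiAlgebraFin ℂ n ℂ).compContinuousLinearMap
      (fun i => if (i : ℕ) < k then ContinuousLinearMap.fst ℂ ℂ ℂ else ContinuousLinearMap.snd ℂ ℂ ℂ))).trans ?_
  refine mul_le_mul_of_nonneg_left ?_ (norm_nonneg _)
  refine (norm_sum_le _ _).trans ?_
  have : ∀ k ∈ Finset.range (n+1),
      ‖(ContinuousMultilinearMap.mkPiAlgebraFin ℂ n ℂ).compContinuousLinearMap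
        (fun i => if (i : ℕ) < k then ContinuousLinearMap.fst ℂ ℂ ℂ else ContinuousLinearMap.snd ℂ ℂ ℂ)‖ ≤ 1 := by
    intro k _
    refine (ContinuousMultilinearMap.norm_compContinuousLinearMap_le _ _).trans ?_
    have h1 : ‖ContinuousMultilinearMap.mkPiAlgebraFin ℂ n ℂ‖ = 1 :=
      ContinuousMultilinearMap.norm_mkPiAlgebraFin
    have h2 : ∀ i : Fin n, ‖(if (i : ℕ) < k then ContinuousLinearMap.fst ℂ ℂ ℂ else ContinuousLinearMap.snd ℂ ℂ ℂ)‖ ≤ 1 := by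
      intro i
      split
      · exact ContinuousLinearMap.opNorm_le_bound _ zero_le_one (fun x => by
          simpa using norm_fst_le x)
      · exact ContinuousLinearMap.opNorm_le_bound _ zero_le_one (fun x => by
          simpa using norm_snd_le x)
    calc ‖ContinuousMultilinearMap.mkPiAlgebraFin ℂ n ℂ‖ * ∏ i : Fin n, ‖(if (i : ℕ) < k then ContinuousLinearMap.fst ℂ ℂ ℂ else ContinuousLinearMap.snd ℂ ℂ ℂ)‖
        ≤ 1 * 1 := by
          refine mul_le_mul h1.le ?_ (Finset.prod_nonneg fun i _ => norm_nonneg _) zero_le_one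
          exact Finset.prod_le_one (fun i _ => norm_nonneg _) (fun i _ => h2 i)
      _ = 1 := by ring
  calc (∑ k ∈ Finset.range (n+1), ‖_‖) ≤ ∑ k ∈ Finset.range (n+1), (1:ℝ) :=
        Finset.sum_le_sum this
    _ = (n+1) := by simp

lemma deriv_ne_zero_of_injOn {D : Set ℂ} (hD : IsOpen D) (hDconn : IsConnected D)
    {f : ℂ → ℂ} (hf : DifferentiableOn ℂ f D) (hinj : Set.InjOn f D)
    {a : ℂ} (ha : a ∈ D) : deriv f a ≠ 0 := by
  intro h0
  have hAn : AnalyticOnNhd ℂ f D := hf.analyticOnNhd hD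
  have hdiffAt : ∀ z ∈ D, DifferentiableAt ℂ f z := fun z hz =>
    hf.differentiableAt (hD.mem_nhds hz)
  have hderivAn : AnalyticOnNhd ℂ (deriv f) D := hAn.deriv
  obtain ⟨r₀, hr₀, hball₀⟩ := Metric.isOpen_iff.1 hD a ha
  -- a convenient second point in any small ball
  have hptmem : ∀ r : ℝ, 0 < r → a + r/2 ∈ ball a r := by
    intro r hr
    simp only [mem_ball, dist_eq_norm, add_sub_cancel_left]
    rw [show ((r:ℂ)/2) = ((r/2 : ℝ) : ℂ) by push_cast; ring]
    rw [Complex.norm_real, Real.norm_eq_abs, abs_of_pos (by linarith)]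
    linarith
  have hptne : ∀ r : ℝ, 0 < r → a + r/2 ≠ a := by
    intro r hr h
    have : (r/2 : ℂ) = 0 := by linear_combination h
    have : (r/2 : ℝ) = 0 := by exact_mod_cast this
    linarith
  -- deriv f is eventually nonzero on a punctured neighborhood of a
  have hfreq : ∀ᶠ z in 𝓝[≠] a, deriv f z ≠ 0 := by
    rcases (hderivAn a ha).eventually_eq_zero_or_eventually_ne_zero with h | h
    · exfalso
      obtain ⟨r₁, hr₁, hball₁⟩ := Metric.eventually_nhds_iff_ball.1 h
      set r := min r₁ r₀ with hrdef
      have hr : 0 < r := lt_min hr₁ hr₀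
      have hBD : ball a r ⊆ D := fun z hz => hball₀ (ball_subset_ball (min_le_right _ _) hz)
      have hconst : f (a + r/2) = f a := by
        refine (convex_ball a r).is_const_of_fderivWithin_eq_zero
          (hf.mono hBD) (fun z hz => ?_) (hptmem r hr) (mem_ball_self hr)
        rw [fderivWithin_eq_fderiv (isOpen_ball.uniqueDiffOn z hz)
          (hdiffAt z (hBD hz))]
        refine ContinuousLinearMap.ext_ring ?_
        have : deriv f z = 0 := hball₁ z (ball_subset_ball (min_le_left _ _) hz)
        simpa [this] using (fderiv_deriv (𝕜 := ℂ) (f := f) (x := z)).trans this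
      exact hptne r hr (hinj (hBD (hptmem r hr)) ha hconst)
    · exact h
  obtain ⟨r, hr, hBD, hderivne⟩ : ∃ r : ℝ, 0 < r ∧ ball a r ⊆ D ∧
      ∀ z ∈ ball a r, z ≠ a → deriv f z ≠ 0 := by
    rw [eventually_nhdsWithin_iff] at hfreq
    obtain ⟨r₁, hr₁, hball₁⟩ := Metric.eventually_nhds_iff_ball.1 hfreq
    refine ⟨min r₁ r₀, lt_min hr₁ hr₀,
      fun z hz => hball₀ (ball_subset_ball (min_le_right _ _) hz),
      fun z hz hne => hball₁ z (ball_subset_ball (min_le_left _ _) hz) hne⟩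
  set B := ball a r with hBdef
  have hinjB : Set.InjOn f B := hinj.mono hBD
  have hgf : ∀ z ∈ B, invFunOn f B (f z) = z := fun z hz => hinjB.leftInvOn_invFunOn hz
  set g := invFunOn f B with hgdef
  set V := f '' B with hVdef
  have hfa : f a ∈ V := ⟨a, mem_ball_self hr, rfl⟩
  have hopen : ∀ s ⊆ B, IsOpen s → IsOpen (f '' s) := by
    rcases (hAn.mono hBD).is_constant_or_isOpen (convex_ball a r).isPreconnected with h | h
    · exfalso
      obtain ⟨w, hw⟩ := h
      have h1 : f (a + r/2) = f a := by rw [hw _ (hptmem r hr), hw _ (mem_ball_self hr)]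
      exact hptne r hr (hinj (hBD (hptmem r hr)) ha h1)
    · exact h
  have hVopen : IsOpen V := hopen B Subset.rfl isOpen_ball
  have hgmem : ∀ w ∈ V, g w ∈ B := by
    rintro w ⟨z, hz, rfl⟩; rw [hgf z hz]; exact hz
  have hfg : ∀ w ∈ V, f (g w) = w := by
    rintro w ⟨z, hz, rfl⟩; rw [hgf z hz]
  have hgcont : ∀ w ∈ V, ContinuousAt g w := by
    intro w hw
    rw [continuousAt_def]
    intro A hA
    obtain ⟨U, hUA, hUopen, hgU⟩ := _root_.mem_nhds_iff.1 hA
    refine mem_of_superset ((hopen (U ∩ B) inter_subset_right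
      (hUopen.inter isOpen_ball)).mem_nhds ?_) ?_
    · exact ⟨g w, ⟨hgU, hgmem w hw⟩, hfg w hw⟩
    · rintro x ⟨z, ⟨hzU, hzB⟩, rfl⟩
      show g (f z) ∈ A
      rw [hgf z hzB]; exact hUA hzU
  have hgdiffV : DifferentiableOn ℂ g V := by
    rw [← Complex.differentiableOn_compl_singleton_and_continuousAt_iff
      (c := f a) (hVopen.mem_nhds hfa)]
    refine ⟨?_, hgcont (f a) hfa⟩
    rintro w ⟨hwV, hwne⟩
    have hzB : g w ∈ B := hgmem w hwV
    have hzne : g w ≠ a := by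
      intro h
      exact (mem_singleton_iff.not.1 hwne) (by rw [← hfg w hwV, h])
    have hd : HasDerivAt f (deriv f (g w)) (g w) := (hdiffAt _ (hBD hzB)).hasDerivAt
    have hd' : deriv f (g w) ≠ 0 := hderivne _ hzB hzne
    have : HasDerivAt g (deriv f (g w))⁻¹ w := by
      refine HasDerivAt.of_local_left_inverse (hgcont w hwV) hd hd' ?_
      filter_upwards [hVopen.mem_nhds hwV] with y hy using hfg y hy
    exact this.differentiableAt.differentiableWithinAt
  have hgat : DifferentiableAt ℂ g (f a) := hgdiffV.differentiableAt (hVopen.mem_nhds hfa)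
  have hcomp : HasDerivAt (g ∘ f) (deriv g (f a) * deriv f a) a :=
    (hgat.hasDerivAt).comp a (hdiffAt a ha).hasDerivAt
  rw [h0, mul_zero] at hcomp
  have hid : HasDerivAt (g ∘ f) 1 a := by
    have : HasDerivAt (fun z : ℂ => z) 1 a := hasDerivAt_id a
    refine this.congr_of_eventuallyEq ?_
    filter_upwards [isOpen_ball.mem_nhds (mem_ball_self hr)] with z hz
    exact hgf z hz
  exact one_ne_zero (hid.unique hcomp)

lemma analyticAt_divided_diff {D : Set ℂ} (hD : IsOpen D)
    {f : ℂ → ℂ} (hf : DifferentiableOn ℂ f D)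
    {a : ℂ} (ha : a ∈ D) {F : ℂ × ℂ → ℂ}
    (hF : ∀ p : ℂ × ℂ, F p = if p.1 = p.2 then deriv f p.1 else (f p.1 - f p.2) / (p.1 - p.2)) :
    AnalyticAt ℂ F (a, a) := by
  obtain ⟨R', hR', hball⟩ := Metric.isOpen_iff.1 hD a ha
  set R : ℝ≥0 := ⟨R'/2, by positivity⟩ with hRdef
  have hRpos : 0 < R := by
    rw [← NNReal.coe_pos]; show (0:ℝ) < R'/2; positivity
  have hsub : closedBall a R ⊆ D := by
    refine subset_trans ?_ hball
    intro z hz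
    have : dist z a ≤ R'/2 := hz
    exact lt_of_le_of_lt this (by linarith)
  have hps : HasFPowerSeriesOnBall f (cauchyPowerSeries f a R) a R :=
    (hf.mono hsub).hasFPowerSeriesOnBall hRpos
  set p := cauchyPowerSeries f a R with hpdef
  set c : ℕ → ℂ := p.coeff with hcdef
  have hd : HasFPowerSeriesOnBall (fderiv ℂ f) p.derivSeries a R := hps.fderiv
  have hnormle : ∀ n : ℕ, ‖dviSeries c n‖ ≤ ‖p.derivSeries n‖ := by
    intro n
    refine (dviSeries_norm_le c n).trans ?_
    have h1 : p.derivSeries n (fun _ => (1:ℂ)) 1 = ((n:ℂ) + 1) * c (n+1) := by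
      rw [derivSeries_apply_diag]
      rw [apply_eq_pow_smul_coeff]
      push_cast
      simp [smul_eq_mul]
      exact Or.inl rfl
    have h2 : ‖p.derivSeries n (fun _ => (1:ℂ)) 1‖ ≤ ‖p.derivSeries n‖ := by
      refine ((p.derivSeries n (fun _ => (1:ℂ))).le_opNorm 1).trans ?_
      simp only [norm_one, mul_one]
      refine ((p.derivSeries n).le_opNorm _).trans ?_
      simp
    rw [h1] at h2
    rw [norm_mul] at h2
    have hc1 : ‖((n:ℂ)+1)‖ = (n:ℝ) + 1 := by
      rw [show ((n:ℂ)+1) = ((n+1 : ℕ) : ℂ) by push_cast; ring]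
      rw [Complex.norm_natCast]
      push_cast; ring
    rw [hc1] at h2
    linarith [h2]
  set r : ℝ≥0 := R / 2 with hrdef
  have hrpos : 0 < r := by positivity
  have hrR : (r : ℝ≥0∞) < (R : ℝ≥0∞) := by
    rw [ENNReal.coe_lt_coe]
    exact NNReal.half_lt_self hRpos.ne'
  have hrlt : (r : ℝ≥0∞) < p.derivSeries.radius :=
    hrR.trans_le (hps.r_le.trans p.radius_le_radius_derivSeries)
  have hsummable : Summable (fun n => ‖dviSeries c n‖ * (r:ℝ) ^ n) := by
    refine Summable.of_nonneg_of_le (fun n => by positivity) (fun n => ?_)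
      (p.derivSeries.summable_norm_mul_pow hrlt)
    exact mul_le_mul_of_nonneg_right (hnormle n) (by positivity)
  have hr_le : (r : ℝ≥0∞) ≤ (dviSeries c).radius :=
    (dviSeries c).le_radius_of_summable_norm hsummable
  refine (HasFPowerSeriesOnBall.analyticAt (p := dviSeries c) (r := r) ?_)
  refine ⟨hr_le, ENNReal.coe_pos.2 hrpos, ?_⟩
  intro y hy
  rw [EMetric.mem_ball, edist_zero_right] at hy
  have hmax : ∀ u : ℂ × ℂ, edist u (0 : ℂ × ℂ) = max (edist u.1 (0:ℂ)) (edist u.2 (0:ℂ)) := by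
    intro u
    rw [Prod.edist_eq]
    rfl
  have hy1 : y.1 ∈ EMetric.ball (0:ℂ) (R : ℝ≥0∞) := by
    change y.1 ∈ eball (0:ℂ) (R : ℝ≥0∞)
    rw [EMetric.mem_ball, edist_zero_right]
    refine lt_of_le_of_lt ?_ (lt_trans hy hrR)
    calc ((‖y.1‖₊ : ℝ≥0∞)) = edist y.1 0 := (edist_zero_right _).symm
      _ ≤ edist y 0 := by rw [hmax]; exact le_max_left _ _
      _ = (‖y‖₊ : ℝ≥0∞) := edist_zero_right _
  have hy2 : y.2 ∈ EMetric.ball (0:ℂ) (R : ℝ≥0∞) := by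
    change y.2 ∈ eball (0:ℂ) (R : ℝ≥0∞)
    rw [EMetric.mem_ball, edist_zero_right]
    refine lt_of_le_of_lt ?_ (lt_trans hy hrR)
    calc ((‖y.2‖₊ : ℝ≥0∞)) = edist y.2 0 := (edist_zero_right _).symm
      _ ≤ edist y 0 := by rw [hmax]; exact le_max_right _ _
      _ = (‖y‖₊ : ℝ≥0∞) := edist_zero_right _
  have hsum1 : HasSum (fun n => y.1 ^ n • c n) (f (a + y.1)) := by
    have := hps.hasSum hy1
    simpa only [apply_eq_pow_smul_coeff] using this
  have hsum2 : HasSum (fun n => y.2 ^ n • c n) (f (a + y.2)) := by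
    have := hps.hasSum hy2
    simpa only [apply_eq_pow_smul_coeff] using this
  have hFval : F ((a, a) + y) = if y.1 = y.2 then deriv f (a + y.1)
      else (f (a + y.1) - f (a + y.2)) / (y.1 - y.2) := by
    rw [hF ((a,a) + y)]
    by_cases h : y.1 = y.2
    · rw [if_pos (by simpa using congrArg (a + ·) h), if_pos h]
      rfl
    · rw [if_neg (by simpa using fun hc => h (by linear_combination hc)), if_neg h]
      congr 1
      show (a + y.1) - (a + y.2) = y.1 - y.2
      ring
  by_cases hy12 : y.1 = y.2
  · -- diagonal case
    have hdsum : HasSum (fun n => p.derivSeries n (fun _ => y.1)) (fderiv ℂ f (a + y.1)) :=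
      hd.hasSum hy1
    have happ : HasSum (fun n => (p.derivSeries n (fun _ => y.1)) 1)
        (fderiv ℂ f (a + y.1) 1) :=
      hdsum.mapL (ContinuousLinearMap.apply ℂ ℂ (1 : ℂ))
    have hterm : ∀ n : ℕ, (p.derivSeries n (fun _ => y.1)) 1
        = dviSeries c n (fun _ => y) := by
      intro n
      have e1 : (p.derivSeries n fun _ : Fin n => y.1)
          = y.1 ^ n • (p.derivSeries n fun _ : Fin n => (1:ℂ)) := by
        have := (p.derivSeries n).map_smul_univ (fun _ : Fin n => y.1) (fun _ => (1:ℂ))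
        simpa [Finset.prod_const, smul_eq_mul] using this
      rw [e1]
      rw [ContinuousLinearMap.smul_apply, derivSeries_apply_diag, apply_eq_pow_smul_coeff]
      rw [dviSeries_apply]
      have hs : ∀ k ∈ Finset.range (n+1), y.1 ^ k * y.2 ^ (n - k) = y.1 ^ n := by
        intro k hk
        rw [← hy12, ← pow_add]
        congr 1
        have := Finset.mem_range.1 hk
        omega
      rw [Finset.sum_congr rfl hs, Finset.sum_const, Finset.card_range]
      simp only [one_pow, one_smul, smul_eq_mul, nsmul_eq_mul]
      push_cast
      ring
    have : HasSum (fun n => dviSeries c n (fun _ => y)) (fderiv ℂ f (a + y.1) 1) := by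
      simpa only [hterm] using happ
    rw [hFval, if_pos hy12]
    rw [show deriv f (a + y.1) = fderiv ℂ f (a + y.1) 1 from (fderiv_apply_one_eq_deriv).symm]
    exact this
  · -- off-diagonal case
    have hne : y.1 - y.2 ≠ 0 := sub_ne_zero.2 hy12
    have hsub' : HasSum (fun n => y.1 ^ n • c n - y.2 ^ n • c n)
        (f (a + y.1) - f (a + y.2)) := hsum1.sub hsum2
    have hshift : HasSum (fun n => y.1 ^ (n+1) • c (n+1) - y.2 ^ (n+1) • c (n+1))
        (f (a + y.1) - f (a + y.2)) := by
      have h0 : (y.1 ^ 0 • c 0 - y.2 ^ 0 • c 0) = 0 := by simp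
      have := (hasSum_nat_add_iff' 1).2 hsub'
      simpa [h0] using this
    have hmul : HasSum (fun n => (y.1 - y.2)⁻¹ * (y.1 ^ (n+1) • c (n+1) - y.2 ^ (n+1) • c (n+1)))
        ((y.1 - y.2)⁻¹ * (f (a + y.1) - f (a + y.2))) := hshift.mul_left _
    have hterm : ∀ n : ℕ, (y.1 - y.2)⁻¹ * (y.1 ^ (n+1) • c (n+1) - y.2 ^ (n+1) • c (n+1))
        = dviSeries c n (fun _ => y) := by
      intro n
      rw [dviSeries_apply]
      have hgeom : (∑ k ∈ Finset.range (n+1), y.1 ^ k * y.2 ^ (n - k)) * (y.1 - y.2)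
          = y.1 ^ (n+1) - y.2 ^ (n+1) := by
        have := geom_sum₂_mul y.1 y.2 (n+1)
        simpa using this
      simp only [smul_eq_mul]
      rw [inv_mul_eq_div, div_eq_iff hne]
      linear_combination (-(c (n+1))) * hgeom
    rw [hFval, if_neg hy12, div_eq_inv_mul]
    simpa only [hterm] using hmul


open Complex Classical

/-- For `f` holomorphic and injective on an open connected `D ⊂ ℂ`, the divided-difference
function `F(x,ξ) = (f(x)-f(ξ))/(x-ξ)` for `x ≠ ξ`, `F(x,x) = f'(x)`, is holomorphic on
`D × D` and nowhere vanishing on `D × D`. -/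
theorem divided_difference_holomorphic_nonvanishing
    (D : Set ℂ) (hD : IsOpen D) (hDconn : IsConnected D)
    (f : ℂ → ℂ) (hf : DifferentiableOn ℂ f D) (hinj : Set.InjOn f D)
    (F : ℂ × ℂ → ℂ)
    (hF : ∀ p : ℂ × ℂ, F p = if p.1 = p.2 then deriv f p.1 else (f p.1 - f p.2) / (p.1 - p.2)) :
    AnalyticOnNhd ℂ F (D ×ˢ D) ∧ ∀ p ∈ D ×ˢ D, F p ≠ 0 := by
  constructor
  · rintro ⟨x, ξ⟩ ⟨hx, hξ⟩
    by_cases hxy : x = ξ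
    · subst hxy
      exact analyticAt_divided_diff hD hf hx hF
    · have hfx : AnalyticAt ℂ f x := (hf.analyticOnNhd hD) x hx
      have hfξ : AnalyticAt ℂ f ξ := (hf.analyticOnNhd hD) ξ hξ
      have h1 : AnalyticAt ℂ (fun q : ℂ × ℂ => (f q.1 - f q.2) / (q.1 - q.2)) (x, ξ) := by
        refine AnalyticAt.div ?_ (analyticAt_fst.sub analyticAt_snd) (sub_ne_zero.2 hxy)
        exact (hfx.comp analyticAt_fst).sub (hfξ.comp analyticAt_snd)
      refine h1.congr ?_
      have hopen : IsOpen {q : ℂ × ℂ | q.1 ≠ q.2} :=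
        isOpen_ne_fun continuous_fst continuous_snd
      filter_upwards [hopen.mem_nhds (by exact hxy : (x, ξ) ∈ {q : ℂ × ℂ | q.1 ≠ q.2})] with q hq
      rw [hF q, if_neg hq]
  · rintro ⟨x, ξ⟩ ⟨hx, hξ⟩
    rw [hF]
    by_cases hxy : x = ξ
    · rw [if_pos hxy]
      exact deriv_ne_zero_of_injOn hD hDconn hf hinj hx
    · rw [if_neg hxy]
      exact div_ne_zero (sub_ne_zero.2 fun h => hxy (hinj hx hξ h)) (sub_ne_zero.2 hxy)
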